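/- Let M be an n×n idempotent matrix with non-negative integer entries (that is, M has entries in ℕ and M² = M). Then there exists a permutation matrix S of size n, natural numbers a, b, c with a + b + c = n, and matrices A of size a×b and B of size b×c with non-negative integer entries, such that S⁻¹MS is the 3×3 block matrix with rows of blocks (0_a, A, AB), (0, 1_b, B), (0, 0, 0_c), where 0_a and 0_c denote zero square blocks of sizes a and c, and 1_b denotes the identity block of size b. -/

import Mathlib

open Finset

namespace FlorAux

variable {n : ℕ} {M : Matrix (Fin n) (Fin n) ℕ}

lemma two_le_sum (g : Fin n → ℕ) {k₁ k₂ : Fin n} (h : k₁ ≠ k₂) :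
    g k₁ + g k₂ ≤ ∑ k, g k := by
  have hsub : ∑ k ∈ ({k₁, k₂} : Finset (Fin n)), g k ≤ ∑ k, g k :=
    Finset.sum_le_sum_of_subset (Finset.subset_univ _)
  rwa [Finset.sum_insert (by simpa using h), Finset.sum_singleton] at hsub

lemma entry (hM : M * M = M) (i j : Fin n) : ∑ k, M i k * M k j = M i j := by
  conv_rhs => rw [← hM]
  rw [Matrix.mul_apply]

lemma diag_le_one (hM : M * M = M) (i : Fin n) : M i i ≤ 1 := by
  have h := entry hM i i
  have h1 : M i i * M i i ≤ M i i := by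
    calc M i i * M i i ≤ ∑ k, M i k * M k i :=
          Finset.single_le_sum (f := fun k => M i k * M k i)
            (fun _ _ => Nat.zero_le _) (Finset.mem_univ i)
      _ = M i i := h
  nlinarith

lemma no_two_cycle (hM : M * M = M) {i j : Fin n} (hij : i ≠ j)
    (h1 : 0 < M i j) (h2 : 0 < M j i) : False := by
  have h := two_le_sum (fun k => M i k * M k i) hij
  rw [entry hM i i] at h
  have hd := diag_le_one hM i
  have hp : 0 < M i j * M j i := Nat.mul_pos h1 h2
  nlinarith

lemma b_offdiag (hM : M * M = M) {i j : Fin n} (hij : i ≠ j)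
    (hi : M i i = 1) (hj : M j j = 1) : M i j = 0 := by
  have h := two_le_sum (fun k => M i k * M k j) hij
  rw [entry hM i j] at h
  simp only [hi, hj, one_mul, mul_one] at h
  omega

lemma lemmaA (hM : M * M = M) {i u v : Fin n} (hi : M i i = 0)
    (hu : 0 < M u i) (hv : 0 < M i v) :
    M u u = 0 ∧ M v v = 0 ∧ 0 < M u v ∧ u ≠ v := by
  have hui : u ≠ i := by rintro rfl; omega
  have hiv : i ≠ v := by rintro rfl; omega
  have huv : u ≠ v := by
    rintro rfl
    exact no_two_cycle hM hui hu hv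
  have key : 0 < M u v := by
    have : M u i * M i v ≤ ∑ k, M u k * M k v :=
      Finset.single_le_sum (f := fun k => M u k * M k v)
        (fun _ _ => Nat.zero_le _) (Finset.mem_univ i)
    rw [entry hM u v] at this
    exact lt_of_lt_of_le (Nat.mul_pos hu hv) this
  have hvv : M v v = 0 := by
    by_contra h
    have hv1 : M v v = 1 := by have := diag_le_one hM v; omega
    have h2 := two_le_sum (fun k => M u k * M k v) hiv
    rw [entry hM u v] at h2
    simp only [hv1, mul_one] at h2
    have hp : 0 < M u i * M i v := Nat.mul_pos hu hv
    omega
  have huu : M u u = 0 := by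
    by_contra h
    have hu1 : M u u = 1 := by have := diag_le_one hM u; omega
    have h2 := two_le_sum (fun k => M u k * M k v) hui
    rw [entry hM u v] at h2
    simp only [hu1, one_mul] at h2
    have hp : 0 < M u i * M i v := Nat.mul_pos hu hv
    omega
  exact ⟨huu, hvv, key, huv⟩

lemma nobad (hM : M * M = M) :
    ∀ i : Fin n, M i i = 0 → (∀ u, M u i = 0) ∨ (∀ v, M i v = 0) := by
  by_contra hcon
  push_neg at hcon
  obtain ⟨i0, hi0, ⟨u0, hu0⟩, v0, hv0⟩ := hcon
  set Bad : Set (Fin n) :=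
    {i | M i i = 0 ∧ (∃ u, 0 < M u i) ∧ ∃ v, 0 < M i v} with hBadDef
  have hne : Bad.Nonempty :=
    ⟨i0, hi0, ⟨u0, Nat.pos_of_ne_zero hu0⟩, v0, Nat.pos_of_ne_zero hv0⟩
  let r : Fin n → Fin n → Prop := fun a b => 0 < M b a ∧ b ≠ a
  have htrans : ∀ a b c, r a b → r b c → r a c := by
    rintro a b c ⟨h1, hba⟩ ⟨h2, hcb⟩
    have hca : c ≠ a := by
      rintro rfl
      exact no_two_cycle hM (Ne.symm hba) h2 h1
    refine ⟨?_, hca⟩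
    have hle : M c b * M b a ≤ ∑ k, M c k * M k a :=
      Finset.single_le_sum (f := fun k => M c k * M k a)
        (fun _ _ => Nat.zero_le _) (Finset.mem_univ b)
    rw [entry hM c a] at hle
    exact lt_of_lt_of_le (Nat.mul_pos h2 h1) hle
  haveI : IsTrans (Fin n) r := ⟨htrans⟩
  haveI : IsIrrefl (Fin n) r := ⟨fun a ha => ha.2 rfl⟩
  obtain ⟨m, hm, hmax⟩ := (Finite.wellFounded_of_trans_of_irrefl r).has_min Bad hne
  obtain ⟨hmm, ⟨u, hu⟩, v, hv⟩ := hm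
  obtain ⟨huu, hvv, huv, hunv⟩ := lemmaA hM hmm hu hv
  have hmv : m ≠ v := by rintro rfl; omega
  have hvnotbad : v ∉ Bad := fun hb => hmax v hb ⟨hv, hmv⟩
  have hrowv : ∀ w, M v w = 0 := by
    by_contra h
    push_neg at h
    obtain ⟨w, hw⟩ := h
    exact hvnotbad ⟨hvv, ⟨m, hv⟩, w, Nat.pos_of_ne_zero hw⟩
  have hzero : M m v = 0 := by
    rw [← entry hM m v]
    apply Finset.sum_eq_zero
    intro k _
    by_contra hk
    have h1 : 0 < M m k := Nat.pos_of_ne_zero fun h => hk (by simp [h])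
    have h2 : 0 < M k v := Nat.pos_of_ne_zero fun h => hk (by simp [h])
    have hmk : m ≠ k := by rintro rfl; omega
    obtain ⟨_, hkk, _, _⟩ := lemmaA hM hmm hu h1
    exact hmax k ⟨hkk, ⟨m, h1⟩, v, h2⟩ ⟨h1, hmk⟩
  omega

end FlorAux

set_option synthInstance.maxHeartbeats 1000000 in
/-- **Flor's theorem on idempotent matrices with non-negative integer entries.**
If `M` is an `n × n` matrix over `ℕ` with `M² = M`, then after simultaneously permuting the
rows and columns (i.e. conjugating by a permutation matrix) `M` takes the `3 × 3` block form
`(0 A AB; 0 1 B; 0 0 0)` for some natural-number matrices `A` and `B`, where the diagonal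
blocks are square of sizes `a`, `b`, `c` with `a + b + c = n`. -/
theorem idempotent_nat_matrix_block_form
    (n : ℕ) (M : Matrix (Fin n) (Fin n) ℕ) (hM : M * M = M) :
    ∃ (a b c : ℕ) (_ : a + b + c = n)
      (A : Matrix (Fin a) (Fin b) ℕ) (B : Matrix (Fin b) (Fin c) ℕ)
      (e : Fin n ≃ (Fin a ⊕ (Fin b ⊕ Fin c))),
      M.submatrix e.symm e.symm =
        Matrix.fromBlocks 0 (Matrix.fromCols A (A * B)) 0
          (Matrix.fromBlocks 1 B 0 0) := by
  classical
  let pa : Fin n → Prop := fun i => M i i = 0 ∧ ∃ v, M i v ≠ 0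
  let pb : Fin n → Prop := fun i => M i i = 1
  let pc : Fin n → Prop := fun i => M i i = 0 ∧ ∀ v, M i v = 0
  -- column of an `a`-index is zero
  have hcol : ∀ j, pa j → ∀ u, M u j = 0 := by
    rintro j ⟨hj0, v, hv⟩ u
    rcases FlorAux.nobad hM j hj0 with h | h
    · exact h u
    · exact absurd (h v) hv
  have hdiag : ∀ i, M i i ≤ 1 := FlorAux.diag_le_one hM
  set a := Fintype.card {i // pa i} with ha
  set b := Fintype.card {i // pb i} with hb
  set c := Fintype.card {i // pc i} with hc
  let f : ({i // pa i} ⊕ ({i // pb i} ⊕ {i // pc i})) → Fin n :=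
    Sum.elim Subtype.val (Sum.elim Subtype.val Subtype.val)
  have hinj : Function.Injective f := by
    rintro (x | x | x) (y | y | y) hxy <;>
      simp only [f, Sum.elim_inl, Sum.elim_inr] at hxy
    · exact congrArg Sum.inl (Subtype.ext hxy)
    · exfalso; obtain ⟨hx, -⟩ := x.2; have hy := y.2
      rw [hxy] at hx; simp only [pb] at hy; omega
    · exfalso; obtain ⟨-, v, hv⟩ := x.2; obtain ⟨-, h⟩ := y.2
      rw [hxy] at hv; exact hv (h v)
    · exfalso; obtain ⟨hy, -⟩ := y.2; have hx := x.2
      rw [← hxy] at hy; simp only [pb] at hx; omega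
    · exact congrArg (Sum.inr ∘ Sum.inl) (Subtype.ext hxy)
    · exfalso; have hx := x.2; obtain ⟨hy, -⟩ := y.2
      rw [hxy] at hx; simp only [pb] at hx; omega
    · exfalso; obtain ⟨-, h⟩ := x.2; obtain ⟨-, v, hv⟩ := y.2
      rw [← hxy] at hv; exact hv (h v)
    · exfalso; have hy := y.2; obtain ⟨hx, -⟩ := x.2
      rw [← hxy] at hy; simp only [pb] at hy; omega
    · exact congrArg (Sum.inr ∘ Sum.inr) (Subtype.ext hxy)
  have hsurj : Function.Surjective f := by
    intro i
    rcases Nat.lt_or_ge (M i i) 1 with h | h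
    · have hi0 : M i i = 0 := by omega
      by_cases hrow : ∃ v, M i v ≠ 0
      · exact ⟨Sum.inl ⟨i, hi0, hrow⟩, rfl⟩
      · push_neg at hrow
        exact ⟨Sum.inr (Sum.inr ⟨i, hi0, hrow⟩), rfl⟩
    · have hi1 : M i i = 1 := le_antisymm (hdiag i) h
      exact ⟨Sum.inr (Sum.inl ⟨i, hi1⟩), rfl⟩
  let e0 : ({i // pa i} ⊕ ({i // pb i} ⊕ {i // pc i})) ≃ Fin n :=
    Equiv.ofBijective f ⟨hinj, hsurj⟩
  let ea : Fin a ≃ {i // pa i} := (Fintype.equivFin _).symm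
  let eb : Fin b ≃ {i // pb i} := (Fintype.equivFin _).symm
  let ec : Fin c ≃ {i // pc i} := (Fintype.equivFin _).symm
  let F : (Fin a ⊕ (Fin b ⊕ Fin c)) ≃ Fin n :=
    (Equiv.sumCongr ea (Equiv.sumCongr eb ec)).trans e0
  have hcard : a + b + c = n := by
    have := Fintype.card_congr F
    simpa [Nat.add_assoc] using this
  refine ⟨a, b, c, hcard,
    Matrix.of (fun p q => M (ea p).1 (eb q).1),
    Matrix.of (fun q r => M (eb q).1 (ec r).1), F.symm, ?_⟩
  have hFa : ∀ p, F (Sum.inl p) = (ea p).1 := fun _ => rfl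
  have hFb : ∀ q, F (Sum.inr (Sum.inl q)) = (eb q).1 := fun _ => rfl
  have hFc : ∀ r, F (Sum.inr (Sum.inr r)) = (ec r).1 := fun _ => rfl
  ext p q
  rw [Matrix.submatrix_apply, Equiv.symm_symm]
  rcases p with p | p | p <;> rcases q with q | q | q
  · -- a × a : column zero
    simpa [hFa] using hcol _ (ea q).2 _
  · -- a × b : A
    simp [hFa, hFb, Matrix.fromCols]
  · -- a × c : A * B
    rw [hFa, hFc]
    simp only [Matrix.fromBlocks_apply₁₂, Matrix.fromCols, Matrix.of_apply,
      Matrix.mul_apply]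
    rw [← FlorAux.entry hM (ea p).1 (ec q).1]
    rw [← Equiv.sum_comp F (fun k => M (ea p).1 k * M k (ec q).1)]
    rw [Fintype.sum_sum_type]
    have h1 : ∑ x : Fin a, M (ea p).1 (F (Sum.inl x)) * M (F (Sum.inl x)) (ec q).1 = 0 := by
      apply Finset.sum_eq_zero
      intro x _
      rw [hFa, hcol _ (ea x).2]
      ring
    rw [h1, Fintype.sum_sum_type]
    have h3 : ∑ x : Fin c, M (ea p).1 (F (Sum.inr (Sum.inr x))) *
        M (F (Sum.inr (Sum.inr x))) (ec q).1 = 0 := by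
      apply Finset.sum_eq_zero
      intro x _
      rw [hFc, (ec x).2.2 (ec q).1]
      ring
    rw [h3]
    simp [hFb, Matrix.mul_apply]
  · -- b × a : column zero
    simpa [hFa, hFb] using hcol _ (ea q).2 _
  · -- b × b : identity
    rw [hFb, hFb]
    rcases eq_or_ne p q with rfl | hpq
    · simp [(eb p).2]
      exact (eb p).2
    · have hne : (eb p).1 ≠ (eb q).1 := fun h =>
        hpq (eb.injective (Subtype.ext h))
      rw [FlorAux.b_offdiag hM hne (eb p).2 (eb q).2]
      simp [Matrix.one_apply_ne hpq]
  · -- b × c : B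
    simp [hFb, hFc]
  · -- c × a
    rw [hFc, (ec p).2.2]
    simp
  · -- c × b
    rw [hFc, (ec p).2.2]
    simp
  · -- c × c
    rw [hFc, (ec p).2.2]
    simp
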